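/- arXiv:2503.18677 — 2 statements merged into one kernel-verified Lean document; each statement's English description precedes it below -/
import Mathlib

section
/- For every integer n \ge 1, with \bar\mu(n) = (n^2+n+2)/(n+2), one has p_s(n+\mu) \ge p_f(n) for 0 < \mu \le \bar\mu(n) and p_s(n+\mu) \le p_f(n) for \mu \ge \bar\mu(n), where p_s(z) = (z+1+\sqrt{z^2+10z-7})/(2(z-1)) and p_f(n) = 1 + 2/n. In particular, max{p_s(n+\mu), p_f(n)} = p_s(n+\mu) when 0 < \mu \le \bar\mu(n). -/
set_option maxHeartbeats 1000000 in
/-- Comparison of the Strauss index `p_s(n+μ)` with the Fujita index `p_f(n) = 1 + 2/n`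
around the threshold `μ̄(n) = (n^2+n+2)/(n+2)`. -/
theorem strauss_fujita_comparison (n : ℕ) (hn : 1 ≤ n) (μ : ℝ) (hμ : 0 < μ)
    (ps pf μbar : ℝ)
    (hps : ps = ((n + μ) + 1 + Real.sqrt ((n + μ) ^ 2 + 10 * (n + μ) - 7)) /
      (2 * ((n + μ) - 1)))
    (hpf : pf = 1 + 2 / n)
    (hbar : μbar = ((n : ℝ) ^ 2 + n + 2) / (n + 2)) :
    (μ ≤ μbar → pf ≤ ps) ∧ (μbar ≤ μ → ps ≤ pf) ∧
      (μ ≤ μbar → max ps pf = ps) := by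
  have hn1 : (1 : ℝ) ≤ n := by exact_mod_cast hn
  have hn0 : (0 : ℝ) < n := by linarith
  set z : ℝ := (n : ℝ) + μ with hzdef
  have hz : (1 : ℝ) < z := by simp only [hzdef]; linarith
  have hD : 0 ≤ z ^ 2 + 10 * z - 7 := by nlinarith
  set s : ℝ := Real.sqrt (z ^ 2 + 10 * z - 7) with hsdef
  have hs0 : 0 ≤ s := Real.sqrt_nonneg _
  have hsq : s ^ 2 = z ^ 2 + 10 * z - 7 := Real.sq_sqrt hD
  have hden : (0 : ℝ) < 2 * (z - 1) := by linarith
  have hkey : (n : ℝ) * ((1 + 2 / n) * (2 * (z - 1))) = 2 * (n + 2) * (z - 1) := by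
    field_simp
  have hfirst : μ ≤ μbar → pf ≤ ps := by
    intro h
    have hmu : μ * ((n : ℝ) + 2) ≤ (n : ℝ) ^ 2 + n + 2 := by
      rw [hbar, le_div_iff₀ (by linarith : (0:ℝ) < (n:ℝ) + 2)] at h
      linarith
    -- n² s² - ((n+4)z - (3n+4))² = 8(z-1)((n²+n+2) - (n+2)μ) ≥ 0
    have hA2 : ((n : ℝ) * s) ^ 2 ≥ ((n + 4) * z - (3 * n + 4)) ^ 2 := by
      have hid : (n : ℝ) ^ 2 * (z ^ 2 + 10 * z - 7) - ((n + 4) * z - (3 * n + 4)) ^ 2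
          = 8 * (z - 1) * (((n : ℝ) ^ 2 + n + 2) - μ * (n + 2)) := by
        simp only [hzdef]; ring
      nlinarith
    have hns : ((n : ℝ) + 4) * z - (3 * n + 4) ≤ n * s := by
      nlinarith [mul_nonneg hn0.le hs0,
        sq_nonneg ((n : ℝ) * s + ((n + 4) * z - (3 * n + 4)))]
    rw [hps, hpf, le_div_iff₀ hden]
    rw [← mul_le_mul_iff_right₀ hn0, hkey]
    have : (n : ℝ) * (z + 1 + s) = n * (z + 1) + n * s := by ring
    rw [this]
    nlinarith
  refine ⟨hfirst, ?_, fun h => max_eq_left (hfirst h)⟩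
  intro h
  have hmu : (n : ℝ) ^ 2 + n + 2 ≤ μ * ((n : ℝ) + 2) := by
    rw [hbar, div_le_iff₀ (by linarith : (0:ℝ) < (n:ℝ) + 2)] at h
    linarith
  have hA2 : ((n : ℝ) * s) ^ 2 ≤ ((n + 4) * z - (3 * n + 4)) ^ 2 := by
    have hid : (n : ℝ) ^ 2 * (z ^ 2 + 10 * z - 7) - ((n + 4) * z - (3 * n + 4)) ^ 2
        = 8 * (z - 1) * (((n : ℝ) ^ 2 + n + 2) - μ * (n + 2)) := by
      simp only [hzdef]; ring
    nlinarith
  have hzbar : ((n : ℝ) + 2) * z ≥ 2 * n ^ 2 + 3 * n + 2 := by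
    simp only [hzdef]; nlinarith
  have hA0 : (0 : ℝ) ≤ (n + 4) * z - (3 * n + 4) := by nlinarith
  have hns : (n : ℝ) * s ≤ (n + 4) * z - (3 * n + 4) := by
    nlinarith [mul_nonneg hn0.le hs0]
  rw [hps, hpf, div_le_iff₀ hden]
  rw [← mul_le_mul_iff_right₀ hn0, hkey]
  have : (n : ℝ) * (z + 1 + s) = n * (z + 1) + n * s := by ring
  rw [this]
  nlinarith
end

section
/- Let m > 0 and \alpha \in \mathbb{R}. Define p_1(2,m,\alpha) = 1 + (2+\alpha)/(m+1) and let p_2(2,m,\alpha) be the positive root of (m+1)p^2 - (3+2\alpha)p - (m+2) = 0. Then for \alpha > -1 one has p_2(2,m,\alpha) \ge p_1(2,m,\alpha), and for -2 < \alpha \le -1 one has p_1(2,m,\alpha) \ge p_2(2,m,\alpha). -/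
/-- Comparison of the two candidate critical exponents `p_1(2,m,α)` and `p_2(2,m,α)`
for the 2-D generalized Tricomi equation. -/
theorem p1_p2_comparison (m α : ℝ) (hm : 0 < m)
    (p1 p2 : ℝ)
    (hp1 : p1 = 1 + (2 + α) / (m + 1))
    (hp2 : p2 = (3 + 2 * α + Real.sqrt ((3 + 2 * α) ^ 2 + 4 * (m + 1) * (m + 2))) /
      (2 * (m + 1))) :
    (-1 < α → p1 ≤ p2) ∧ (-2 < α → α ≤ -1 → p2 ≤ p1) := by
  have hm1 : (0:ℝ) < m + 1 := by linarith
  have hp1' : p1 = (2 * (m + 1) + 2 * (2 + α)) / (2 * (m + 1)) := by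
    rw [hp1]; field_simp
  constructor
  · intro hα
    have hs : 2 * m + 3 ≤ Real.sqrt ((3 + 2 * α) ^ 2 + 4 * (m + 1) * (m + 2)) := by
      rw [show (2 * m + 3 : ℝ) = Real.sqrt ((2 * m + 3) ^ 2) from
        (Real.sqrt_sq (by linarith)).symm]
      exact Real.sqrt_le_sqrt (by nlinarith)
    rw [hp1', hp2, div_le_div_iff₀ (by linarith) (by linarith)]
    nlinarith
  · intro hα2 hα1
    have hs : Real.sqrt ((3 + 2 * α) ^ 2 + 4 * (m + 1) * (m + 2)) ≤ 2 * m + 3 := by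
      rw [show (2 * m + 3 : ℝ) = Real.sqrt ((2 * m + 3) ^ 2) from
        (Real.sqrt_sq (by linarith)).symm]
      exact Real.sqrt_le_sqrt (by nlinarith)
    rw [hp1', hp2, div_le_div_iff₀ (by linarith) (by linarith)]
    nlinarith
end
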